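/- arXiv:2305.06117 — 2 statements merged into one kernel-verified Lean document; each statement's English description precedes it below -/
import Mathlib

section
/- Assume p is odd and e ≥ 1. Let a ∈ V_R with a ≠ 0, b := f_R(a,a)/2, u(x) := x^p − a^{p−1}x, Δ_0(x) := −(x/a)·((b/a)x − f_R(x,a)), and let R_1 be the unique additive polynomial of degree p^{e−1} with x·R(x) = u(x)·R_1(u(x)) + Δ_0(x)^p − Δ_0(x). Let a' ∈ V_R with ω_R(a,a') = 0 (where ω_R(a,a') := f_R(a,a') − f_R(a',a)). Then π(a') := (u(a'), f_{R_1}(u(a'),u(a'))/2) belongs to H_{R_1}; that is, E_{R_1}(u(a')) = 0 and (f_{R_1}(u(a'),u(a'))/2)^p − f_{R_1}(u(a'),u(a'))/2 = u(a')·R_1(u(a')). -/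
open Finset Polynomial

/-- The additive polynomial `R(x) = ∑_{i=0}^e a_i x^{p^i}`, evaluated in any commutative ring. -/
def Rgen {A : Type*} [CommRing A] (p e : ℕ) (a : ℕ → A) (x : A) : A :=
  ∑ i ∈ Finset.range (e + 1), a i * x ^ p ^ i

/-- `E_R(x) = R(x)^{p^e} + ∑_{i=0}^e (a_i x)^{p^{e-i}}`. -/
def Egen {A : Type*} [CommRing A] (p e : ℕ) (a : ℕ → A) (x : A) : A :=
  Rgen p e a x ^ p ^ e + ∑ i ∈ Finset.range (e + 1), (a i * x) ^ p ^ (e - i)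

/-- `f_R(x,y) = -∑_{i=0}^{e-1} ( ∑_{j=0}^{e-i-1} (a_i x^{p^i} y)^{p^j} + (x R(y))^{p^i} )`. -/
def fgen {A : Type*} [CommRing A] (p e : ℕ) (a : ℕ → A) (x y : A) : A :=
  -∑ i ∈ Finset.range e,
    ((∑ j ∈ Finset.range (e - i), (a i * x ^ p ^ i * y) ^ p ^ j) + (x * Rgen p e a y) ^ p ^ i)

/-- The set `H_R = {(a,b) : E_R(a) = 0, b^p - b = a R(a)}`. -/
def Hset {K : Type*} [CommRing K] (p e : ℕ) (a : ℕ → K) : Set (K × K) :=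
  {h | Egen p e a h.1 = 0 ∧ h.2 ^ p - h.2 = h.1 * Rgen p e a h.1}

/-- The group law `(a,b)·(a',b') = (a+a', b+b'+f_R(a,a'))` on `H_R`. -/
def Hmul {K : Type*} [CommRing K] (p e : ℕ) (a : ℕ → K) (h h' : K × K) : K × K :=
  (h.1 + h'.1, h.2 + h'.2 + fgen p e a h.1 h'.1)

section Maps
variable {A B : Type*} [CommRing A] [CommRing B]

theorem map_Rgen (φ : A →+* B) (p d : ℕ) (s : ℕ → A) (x : A) :
    φ (Rgen p d s x) = Rgen p d (fun i => φ (s i)) (φ x) := by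
  simp [Rgen, map_sum]

theorem map_Egen (φ : A →+* B) (p d : ℕ) (s : ℕ → A) (x : A) :
    φ (Egen p d s x) = Egen p d (fun i => φ (s i)) (φ x) := by
  simp [Egen, map_sum, map_Rgen]

theorem map_fgen (φ : A →+* B) (p d : ℕ) (s : ℕ → A) (x y : A) :
    φ (fgen p d s x y) = fgen p d (fun i => φ (s i)) (φ x) (φ y) := by
  simp [fgen, map_sum, map_Rgen]

end Maps

section Char
variable {A : Type*} [CommRing A] (p₀ : ℕ) [Fact p₀.Prime] [CharP A p₀] {n p : ℕ}

theorem sum_pow_cp {ι : Type*} (s : Finset ι) (f : ι → A) (m : ℕ) :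
    (∑ i ∈ s, f i) ^ p₀ ^ m = ∑ i ∈ s, f i ^ p₀ ^ m := by
  classical
  induction s using Finset.induction with
  | empty => simp [zero_pow (pow_ne_zero m (Nat.Prime.ne_zero Fact.out))]
  | insert _ _ h ih => rw [Finset.sum_insert h, Finset.sum_insert h, add_pow_char_pow, ih]

theorem Rgen_add (hp : p = p₀ ^ n) (d : ℕ) (s : ℕ → A) (x y : A) :
    Rgen p d s (x + y) = Rgen p d s x + Rgen p d s y := by
  subst hp
  simp only [Rgen, ← Finset.sum_add_distrib]
  refine Finset.sum_congr rfl fun i _ => ?_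
  rw [← pow_mul, add_pow_char_pow, mul_add]

theorem pow_p_add (hp : p = p₀ ^ n) (x y : A) (k : ℕ) :
    (x + y) ^ p ^ k = x ^ p ^ k + y ^ p ^ k := by
  subst hp
  rw [← pow_mul p₀ n k, add_pow_char_pow]

theorem pow_p_sub (hp : p = p₀ ^ n) (x y : A) (k : ℕ) :
    (x - y) ^ p ^ k = x ^ p ^ k - y ^ p ^ k := by
  subst hp
  rw [← pow_mul p₀ n k, sub_pow_char_pow]

theorem fgen_add_left (hp : p = p₀ ^ n) (d : ℕ) (s : ℕ → A) (x x' y : A) :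
    fgen p d s (x + x') y = fgen p d s x y + fgen p d s x' y := by
  have key : ∀ (u v : A) (k : ℕ), (u + v) ^ p ^ k = u ^ p ^ k + v ^ p ^ k :=
    fun u v k => pow_p_add p₀ hp u v k
  simp only [fgen, ← neg_add, ← Finset.sum_add_distrib]
  congr 1
  refine Finset.sum_congr rfl fun i _ => ?_
  have h1 : ∀ j : ℕ, (s i * (x + x') ^ p ^ i * y) ^ p ^ j
      = (s i * x ^ p ^ i * y) ^ p ^ j + (s i * x' ^ p ^ i * y) ^ p ^ j := by
    intro j
    rw [key, show s i * (x ^ p ^ i + x' ^ p ^ i) * y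
      = s i * x ^ p ^ i * y + (s i * x' ^ p ^ i * y) from by ring, key]
  have h2 : ((x + x') * Rgen p d s y) ^ p ^ i
      = (x * Rgen p d s y) ^ p ^ i + (x' * Rgen p d s y) ^ p ^ i := by
    rw [add_mul, key]
  rw [Finset.sum_congr rfl (fun j _ => h1 j), Finset.sum_add_distrib, h2]
  ring

theorem fgen_zero_left (hp1 : p ≠ 0) (d : ℕ) (s : ℕ → A) (y : A) :
    fgen p d s 0 y = 0 := by
  have hz : ∀ k : ℕ, (0 : A) ^ p ^ k = 0 := fun k => zero_pow (pow_ne_zero k hp1)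
  simp [fgen, hz]

end Char

section LemA
variable {A : Type*} [CommRing A] (p₀ : ℕ) [Fact p₀.Prime] [CharP A p₀] {n p : ℕ}

theorem lemmaA (hp : p = p₀ ^ n) (hoddp : Odd p) (d : ℕ) (s : ℕ → A) (x y : A) :
    fgen p d s x y ^ p - fgen p d s x y
      = x * Rgen p d s y + y * Rgen p d s x - x ^ p ^ d * Egen p d s y := by
  set t : ℕ → A := fun i => s i * x ^ p ^ i * y with ht
  set B : A := x * Rgen p d s y with hB
  -- step 1 : power of the big sum
  have hshift : ∀ (z : A) (j : ℕ), (z ^ p ^ j) ^ p = z ^ p ^ (j + 1) := by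
    intro z j
    rw [← pow_mul, ← pow_succ]
  have hSp : (∑ i ∈ range d, ((∑ j ∈ range (d - i), t i ^ p ^ j) + B ^ p ^ i)) ^ p
      = ∑ i ∈ range d, ((∑ j ∈ range (d - i), t i ^ p ^ (j + 1)) + B ^ p ^ (i + 1)) := by
    have e1 : ∀ (u : Finset ℕ) (f : ℕ → A), (∑ j ∈ u, f j) ^ p = ∑ j ∈ u, f j ^ p := by
      intro u f
      subst hp
      exact sum_pow_cp p₀ u f n
    have e2 : ∀ u v : A, (u + v) ^ p = u ^ p + v ^ p := by
      intro u v
      have := pow_p_add p₀ hp u v 1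
      simpa [pow_one] using this
    rw [e1]
    refine Finset.sum_congr rfl fun i _ => ?_
    rw [e2, e1]
    simp only [hshift]
  -- step 2 : telescoping
  have htel : (∑ i ∈ range d, ((∑ j ∈ range (d - i), t i ^ p ^ j) + B ^ p ^ i)) ^ p
      - (∑ i ∈ range d, ((∑ j ∈ range (d - i), t i ^ p ^ j) + B ^ p ^ i))
      = (∑ i ∈ range d, (t i ^ p ^ (d - i) - t i)) + (B ^ p ^ d - B) := by
    rw [hSp, ← Finset.sum_sub_distrib]
    have hper : ∀ i ∈ range d,
        ((∑ j ∈ range (d - i), t i ^ p ^ (j + 1)) + B ^ p ^ (i + 1))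
          - ((∑ j ∈ range (d - i), t i ^ p ^ j) + B ^ p ^ i)
        = (t i ^ p ^ (d - i) - t i) + (B ^ p ^ (i + 1) - B ^ p ^ i) := by
      intro i _
      have : (∑ j ∈ range (d - i), t i ^ p ^ (j + 1)) - (∑ j ∈ range (d - i), t i ^ p ^ j)
          = t i ^ p ^ (d - i) - t i := by
        rw [← Finset.sum_sub_distrib, Finset.sum_range_sub (fun j => t i ^ p ^ j)]
        simp
      linear_combination this
    rw [Finset.sum_congr rfl hper, Finset.sum_add_distrib,
      Finset.sum_range_sub (fun i => B ^ p ^ i)]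
    simp
  -- step 3
  have hmain : fgen p d s x y ^ p - fgen p d s x y
      = -((∑ i ∈ range d, (t i ^ p ^ (d - i) - t i)) + (B ^ p ^ d - B)) := by
    rw [fgen]
    rw [hoddp.neg_pow]
    linear_combination -htel
  rw [hmain]
  -- step 4 : identify the pieces
  have f1 : ∀ i ∈ range d, t i ^ p ^ (d - i) = (s i * y) ^ p ^ (d - i) * x ^ p ^ d := by
    intro i hi
    have hx : (x ^ p ^ i) ^ p ^ (d - i) = x ^ p ^ d := by
      rw [← pow_mul, ← pow_add, Nat.add_sub_cancel' (Nat.le_of_lt (Finset.mem_range.mp hi))]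
    rw [ht]
    calc (s i * x ^ p ^ i * y) ^ p ^ (d - i)
        = (s i * y) ^ p ^ (d - i) * ((x ^ p ^ i) ^ p ^ (d - i)) := by
          rw [mul_pow, mul_pow, mul_pow]; ring
      _ = (s i * y) ^ p ^ (d - i) * x ^ p ^ d := by rw [hx]
  have f2 : ∑ i ∈ range d, t i = (Rgen p d s x - s d * x ^ p ^ d) * y := by
    have : Rgen p d s x = (∑ i ∈ range d, s i * x ^ p ^ i) + s d * x ^ p ^ d := by
      rw [Rgen, Finset.sum_range_succ]
    rw [this, ht, ← Finset.sum_mul]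
    ring
  have f3 : ∑ i ∈ range d, (s i * y) ^ p ^ (d - i)
      = Egen p d s y - Rgen p d s y ^ p ^ d - s d * y := by
    have : Egen p d s y = Rgen p d s y ^ p ^ d
        + ((∑ i ∈ range d, (s i * y) ^ p ^ (d - i)) + (s d * y) ^ p ^ (d - d)) := by
      rw [Egen, Finset.sum_range_succ]
    rw [this]
    simp
  have f4 : ∑ i ∈ range d, (t i ^ p ^ (d - i) - t i)
      = (Egen p d s y - Rgen p d s y ^ p ^ d - s d * y) * x ^ p ^ d
        - (Rgen p d s x - s d * x ^ p ^ d) * y := by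
    rw [Finset.sum_sub_distrib, Finset.sum_congr rfl f1, ← Finset.sum_mul, f3, f2]
  rw [f4, hB]
  rw [mul_pow]
  ring
end LemA

section Shape
variable {K : Type*} [CommRing K]

/-- every nonzero coefficient sits in degree a power of `p` -/
def PShape (p : ℕ) (W : K[X]) : Prop := ∀ m, W.coeff m ≠ 0 → ∃ k, m = p ^ k

theorem PShape.add {p : ℕ} {W V : K[X]} (hW : PShape p W) (hV : PShape p V) :
    PShape p (W + V) := by
  intro m hm
  rw [Polynomial.coeff_add] at hm
  by_cases h : W.coeff m = 0
  · exact hV m (by intro h2; rw [h, h2, add_zero] at hm; exact hm rfl)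
  · exact hW m h

theorem PShape.zero {p : ℕ} : PShape p (0 : K[X]) := by
  intro m hm
  simp at hm

theorem PShape.neg {p : ℕ} {W : K[X]} (hW : PShape p W) : PShape p (-W) := by
  intro m hm
  rw [Polynomial.coeff_neg, neg_ne_zero] at hm
  exact hW m hm

theorem PShape.sub {p : ℕ} {W V : K[X]} (hW : PShape p W) (hV : PShape p V) :
    PShape p (W - V) := by
  rw [sub_eq_add_neg]; exact hW.add hV.neg

theorem PShape.cmul {p : ℕ} {W : K[X]} (a : K) (hW : PShape p W) : PShape p (C a * W) := by
  intro m hm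
  rw [Polynomial.coeff_C_mul] at hm
  exact hW m fun h => hm (by rw [h, mul_zero])

theorem PShape.sum {p : ℕ} {ι : Type*} (u : Finset ι) (f : ι → K[X])
    (h : ∀ i ∈ u, PShape p (f i)) : PShape p (∑ i ∈ u, f i) := by
  classical
  induction u using Finset.induction with
  | empty => simpa using PShape.zero
  | insert _ _ hni ih =>
    rw [Finset.sum_insert hni]
    exact (h _ (Finset.mem_insert_self _ _)).add
      (ih fun i hi => h i (Finset.mem_insert_of_mem hi))

theorem PShape.Xpow {p : ℕ} (k : ℕ) : PShape p (X ^ p ^ k : K[X]) := by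
  intro m hm
  rw [Polynomial.coeff_X_pow] at hm
  by_cases h : m = p ^ k
  · exact ⟨k, h⟩
  · simp [h] at hm

theorem PShape.fgen {p : ℕ} (d : ℕ) (s : ℕ → K) (y : K) (V : K[X])
    (hv : ∀ k, PShape p (V ^ p ^ k)) :
    PShape p (fgen p d (fun i => C (s i)) V (C y)) := by
  have hR : Rgen p d (fun i => C (s i)) (C y) = C (Rgen p d s y) := by
    rw [map_Rgen (C : K →+* K[X])]
  rw [_root_.fgen, hR]
  refine PShape.neg (PShape.sum _ _ fun i _ => PShape.add (PShape.sum _ _ fun j _ => ?_) ?_)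
  · have : (C (s i) * V ^ p ^ i * C y) ^ p ^ j
        = C ((s i) ^ p ^ j * y ^ p ^ j) * V ^ p ^ (i + j) := by
      rw [mul_pow, mul_pow, ← pow_mul, ← pow_add, map_mul, map_pow, map_pow]
      ring
    rw [this]
    exact (hv (i + j)).cmul _
  · have : (V * C (Rgen p d s y)) ^ p ^ i = C (Rgen p d s y ^ p ^ i) * V ^ p ^ i := by
      rw [mul_pow, map_pow]; ring
    rw [this]
    exact (hv i).cmul _

end Shape

section Coeffs
variable {K : Type*} [CommRing K] (p₀ : ℕ) [Fact p₀.Prime] [CharP K p₀]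

theorem coeff_pow_p_mul (f : K[X]) (j : ℕ) : (f ^ p₀).coeff (p₀ * j) = f.coeff j ^ p₀ := by
  rw [← Polynomial.map_frobenius_expand p₀, Polynomial.coeff_map,
    Polynomial.coeff_expand_mul' (Fact.out : p₀.Prime).pos]
  rfl

theorem coeff_pow_p_not (f : K[X]) (d : ℕ) (h : ¬ p₀ ∣ d) : (f ^ p₀).coeff d = 0 := by
  rw [← Polynomial.map_frobenius_expand p₀, Polynomial.coeff_map,
    Polynomial.coeff_expand (Fact.out : p₀.Prime).pos, if_neg h, map_zero]

theorem coeff_pow_cp_mul (m : ℕ) (f : K[X]) (j : ℕ) :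
    (f ^ p₀ ^ m).coeff (p₀ ^ m * j) = f.coeff j ^ p₀ ^ m := by
  induction m generalizing j with
  | zero => simp
  | succ m ih =>
    have h1 : f ^ p₀ ^ (m + 1) = (f ^ p₀ ^ m) ^ p₀ := by
      rw [← pow_mul, ← pow_succ]
    have h2 : p₀ ^ (m + 1) * j = p₀ * (p₀ ^ m * j) := by ring
    rw [h1, h2, coeff_pow_p_mul, ih, ← pow_mul, ← pow_succ]

theorem coeff_pow_cp_not (m : ℕ) (f : K[X]) (d : ℕ) (h : ¬ p₀ ^ m ∣ d) :
    (f ^ p₀ ^ m).coeff d = 0 := by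
  induction m generalizing d with
  | zero => exact absurd (one_dvd d) (by simpa using h)
  | succ m ih =>
    have h1 : f ^ p₀ ^ (m + 1) = (f ^ p₀ ^ m) ^ p₀ := by
      rw [← pow_mul, ← pow_succ]
    rw [h1]
    by_cases hd : p₀ ∣ d
    · obtain ⟨d', rfl⟩ := hd
      rw [coeff_pow_p_mul, ih]
      · exact zero_pow (Fact.out : p₀.Prime).ne_zero
      · intro hdvd
        exact h (by rw [pow_succ']; exact mul_dvd_mul_left p₀ hdvd)
    · exact coeff_pow_p_not p₀ _ d hd

end Coeffs

section Chase
variable {K : Type*} [Field K] (p₀ : ℕ) [Fact p₀.Prime] [CharP K p₀] {n p : ℕ}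

theorem chase (hp : p = p₀ ^ n) (hn : 0 < n) (m : ℕ) (W : K[X]) (hsh : PShape p W)
    (E B α : K) (hα : α ≠ 0) (hB : B = E * α ^ ((p - 1) * p ^ m))
    (hid : W ^ p - W = C E * X ^ p ^ (m + 1) - C B * X ^ p ^ m)
    (h0 : W.eval α = 0) : E = 0 := by
  have hp0two : 2 ≤ p₀ := (Fact.out : p₀.Prime).two_le
  have hp2 : 2 ≤ p := by
    rw [hp]
    calc 2 = 2 ^ 1 := rfl
    _ ≤ p₀ ^ 1 := Nat.pow_le_pow_left hp0two 1
    _ ≤ p₀ ^ n := Nat.pow_le_pow_right (le_trans one_le_two hp0two) hn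
  have hpinj : ∀ i j : ℕ, p ^ i = p ^ j → i = j :=
    fun i j h => Nat.pow_right_injective hp2 h
  set w : ℕ → K := fun k => W.coeff (p ^ k) with hw
  -- coefficient equations
  have hco : ∀ dd : ℕ, (W ^ p).coeff dd - W.coeff dd
      = (if dd = p ^ (m + 1) then E else 0) - (if dd = p ^ m then B else 0) := by
    intro dd
    have := congrArg (fun q : K[X] => q.coeff dd) hid
    simpa [Polynomial.coeff_sub, Polynomial.coeff_C_mul, Polynomial.coeff_X_pow,
      mul_ite, mul_one, mul_zero] using this
  have hWpow : ∀ k : ℕ, (W ^ p).coeff (p ^ (k + 1)) = w k ^ p := by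
    intro k
    have h1 : p ^ (k + 1) = p * p ^ k := by rw [pow_succ']
    rw [h1, hw]
    subst hp
    exact coeff_pow_cp_mul p₀ n W ((p₀ ^ n) ^ k)
  have eq1 : ∀ k : ℕ, w k ^ p - w (k + 1)
      = (if k + 1 = m + 1 then E else 0) - (if k + 1 = m then B else 0) := by
    intro k
    have h := hco (p ^ (k + 1))
    rw [hWpow k] at h
    have c1 : (p ^ (k + 1) = p ^ (m + 1)) = (k + 1 = m + 1) := by
      apply propext; exact ⟨fun hh => hpinj _ _ hh, fun hh => by rw [hh]⟩
    have c2 : (p ^ (k + 1) = p ^ m) = (k + 1 = m) := by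
      apply propext; exact ⟨fun hh => hpinj _ _ hh, fun hh => by rw [hh]⟩
    simp only [c1, c2] at h
    simp only [hw]
    exact h
  have hWp1 : (W ^ p).coeff 1 = 0 := by
    subst hp
    refine coeff_pow_cp_not p₀ n W 1 ?_
    intro hdvd
    exact absurd (Nat.dvd_one.mp hdvd) (by omega)
  have eq0 : - w 0 = (if (1 : ℕ) = p ^ (m + 1) then E else 0)
      - (if (1 : ℕ) = p ^ m then B else 0) := by
    have h := hco 1
    rw [hWp1] at h
    have hw0 : w 0 = W.coeff 1 := by rw [hw]; simp
    rw [hw0]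
    linear_combination h
  -- descending: everything above m vanishes
  have hstep : ∀ k : ℕ, m + 1 ≤ k → w k ^ p = w (k + 1) := by
    intro k hk
    have h := eq1 k
    rw [if_neg (by omega : ¬ k + 1 = m + 1), if_neg (by omega : ¬ k + 1 = m)] at h
    linear_combination h
  have hiter : ∀ (j k : ℕ), m + 1 ≤ k → w k ^ p ^ j = w (k + j) := by
    intro j
    induction j with
    | zero => intro k _; simp
    | succ j ih =>
      intro k hk
      have h1 : w k ^ p ^ (j + 1) = (w k ^ p) ^ p ^ j := by
        rw [← pow_mul, ← pow_succ']
      rw [h1, hstep k hk, ih (k + 1) (by omega)]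
      congr 1
      omega
  have hdesc : ∀ k : ℕ, m + 1 ≤ k → w k = 0 := by
    intro k hk
    have hj : W.natDegree < p ^ (k + (W.natDegree + 1)) := by
      calc W.natDegree < k + (W.natDegree + 1) := by omega
      _ < p ^ (k + (W.natDegree + 1)) := Nat.lt_pow_self (show 1 < p by omega)
    have h1 : w (k + (W.natDegree + 1)) = 0 := by
      rw [hw]
      exact Polynomial.coeff_eq_zero_of_natDegree_lt hj
    have h2 := hiter (W.natDegree + 1) k hk
    rw [h1] at h2
    exact pow_eq_zero_iff (pow_ne_zero _ (by omega : p ≠ 0)) |>.mp h2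
  -- ascending: everything below m vanishes
  have hasc : ∀ k : ℕ, k < m → w k = 0 := by
    intro k
    induction k with
    | zero =>
      intro hk
      have h := eq0
      rw [if_neg (by have := Nat.one_lt_pow (by omega : m + 1 ≠ 0) (by omega : 1 < p); omega),
        if_neg (by have := Nat.one_lt_pow (by omega : m ≠ 0) (by omega : 1 < p); omega)] at h
      linear_combination -h
    | succ k ih =>
      intro hk
      have h := eq1 k
      rw [if_neg (by omega : ¬ k + 1 = m + 1), if_neg (by omega : ¬ k + 1 = m),
        ih (by omega)] at h
      have : w (k + 1) = 0 ^ p := by linear_combination -h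
      rw [this, zero_pow (by omega : p ≠ 0)]
  -- the middle coefficient
  have hwm : w m = B := by
    rcases m with _ | m'
    · have h := eq0
      rw [if_neg (by have := Nat.one_lt_pow (by omega : 0 + 1 ≠ 0) (by omega : 1 < p); omega),
        if_pos (by simp)] at h
      linear_combination -h
    · have h := eq1 m'
      rw [if_neg (by omega), if_pos rfl, hasc m' (by omega)] at h
      have h2 : (0 : K) ^ p = 0 := zero_pow (by omega : p ≠ 0)
      linear_combination -h + h2
  -- identify W
  have hWeq : W = C B * X ^ p ^ m := by
    ext dd
    rw [Polynomial.coeff_C_mul, Polynomial.coeff_X_pow]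
    by_cases hd : dd = p ^ m
    · rw [if_pos hd, mul_one, hd]
      exact hwm
    · rw [if_neg hd, mul_zero]
      by_contra hne
      obtain ⟨k, rfl⟩ := hsh dd hne
      rcases lt_or_ge k m with h | h
      · exact hne (hasc k h)
      · have : k ≠ m := fun hkm => hd (by rw [hkm])
        exact hne (hdesc k (by omega))
  rw [hWeq] at h0
  simp only [Polynomial.eval_mul, Polynomial.eval_C, Polynomial.eval_pow,
    Polynomial.eval_X] at h0
  have hBz : B = 0 := by
    rcases mul_eq_zero.mp h0 with h | h
    · exact h
    · exact absurd h (pow_ne_zero _ hα)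
  rw [hBz] at hB
  rcases mul_eq_zero.mp hB.symm with h | h
  · exact h
  · exact absurd h (pow_ne_zero _ hα)

end Chase


/-- with the notation of the quotient step, for `a' ∈ V_R` with `ω_R(a,a') = 0`,
the pair `π(a') := (u(a'), f_{R₁}(u(a'),u(a'))/2)` belongs to `H_{R₁}`: that is,
`E_{R₁}(u(a')) = 0` and `(f_{R₁}(u(a'),u(a'))/2)^p − f_{R₁}(u(a'),u(a'))/2 = u(a')·R₁(u(a'))`. -/
theorem statement9 {F K : Type*} [Field F] [Fintype F] [Field K] [IsAlgClosed K] [Algebra F K]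
    (p₀ n p s q e : ℕ) (hp₀ : p₀.Prime) (hodd : Odd p₀) [CharP F p₀]
    (hn : 0 < n) (hpn : p = p₀ ^ n) (hs : 0 < s) (hq : q = p ^ s)
    (hcard : Fintype.card F = q) (a : ℕ → F) (hae : a e ≠ 0) (he : 1 ≤ e)
    (α : K) (hαV : Egen p e (fun i => algebraMap F K (a i)) α = 0) (hα0 : α ≠ 0)
    -- `R₁(z) = ∑_{i=0}^{e-1} c_i z^{p^i}` is the additive polynomial of the quotient step
    (c : ℕ → K)
    (hc : Polynomial.X * Rgen p e (fun i => Polynomial.C (algebraMap F K (a i))) Polynomial.X =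
      (Polynomial.X ^ p - Polynomial.C (α ^ (p - 1)) * Polynomial.X) *
        Rgen p (e - 1) (fun i => Polynomial.C (c i))
          (Polynomial.X ^ p - Polynomial.C (α ^ (p - 1)) * Polynomial.X) +
      (-(Polynomial.C α⁻¹ * Polynomial.X) *
        (Polynomial.C (fgen p e (fun i => algebraMap F K (a i)) α α / 2 / α) * Polynomial.X -
          fgen p e (fun i => Polynomial.C (algebraMap F K (a i))) Polynomial.X
            (Polynomial.C α))) ^ p -
      -(Polynomial.C α⁻¹ * Polynomial.X) *
        (Polynomial.C (fgen p e (fun i => algebraMap F K (a i)) α α / 2 / α) * Polynomial.X -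
          fgen p e (fun i => Polynomial.C (algebraMap F K (a i))) Polynomial.X
            (Polynomial.C α)))
    (α' : K) (hα'V : Egen p e (fun i => algebraMap F K (a i)) α' = 0)
    (hω : fgen p e (fun i => algebraMap F K (a i)) α α' =
      fgen p e (fun i => algebraMap F K (a i)) α' α) :
    let ua' : K := α' ^ p - α ^ (p - 1) * α'
    Egen p (e - 1) c ua' = 0 ∧
    (fgen p (e - 1) c ua' ua' / 2) ^ p - fgen p (e - 1) c ua' ua' / 2 =
      ua' * Rgen p (e - 1) c ua' := by
  intro ua'
  haveI : Fact p₀.Prime := ⟨hp₀⟩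
  haveI hKchar : CharP K p₀ := charP_of_injective_algebraMap (algebraMap F K).injective p₀
  have hoddp : Odd p := hpn ▸ hodd.pow
  have hpne : p ≠ 0 := by
    rw [hpn]; exact pow_ne_zero n hp₀.ne_zero
  have hp2 : 2 ≤ p := by
    rw [hpn]
    calc 2 = 2 ^ 1 := rfl
    _ ≤ p₀ ^ 1 := Nat.pow_le_pow_left hp₀.two_le 1
    _ ≤ p₀ ^ n := Nat.pow_le_pow_right (le_trans one_le_two hp₀.two_le) hn
  have h2K : (2 : K) ≠ 0 := by
    intro h
    have hdvd := (CharP.cast_eq_zero_iff K p₀ 2).mp (by exact_mod_cast h)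
    have : p₀ = 2 := (Nat.prime_dvd_prime_iff_eq hp₀ Nat.prime_two).mp hdvd
    rw [this] at hodd
    exact (Nat.not_odd_iff_even.mpr (by decide)) hodd
  -- abbreviations
  set AC : ℕ → K[X] := fun i => Polynomial.C (algebraMap F K (a i)) with hACdef
  set cC : ℕ → K[X] := fun i => Polynomial.C (c i) with hcCdef
  set Ai : ℕ → K := fun i => algebraMap F K (a i) with hAidef
  have hACAi : AC = fun i => Polynomial.C (Ai i) := rfl
  set b' : K := fgen p e Ai α α / 2 / α with hb'def
  set uX : K[X] := X ^ p - C (α ^ (p - 1)) * X with huXdef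
  set RX : K[X] := Rgen p e AC X with hRXdef
  set R₁u : K[X] := Rgen p (e - 1) cC uX with hR₁udef
  set fXα : K[X] := fgen p e AC X (C α) with hfXαdef
  set D : K[X] := -(C α⁻¹ * X) * (C b' * X - fXα) with hDdef
  -- hc now reads:
  have hc' : X * RX = uX * R₁u + D ^ p - D := hc
  have hua : ua' = α' ^ p - α ^ (p - 1) * α' := rfl
  -- scalar abbreviations
  set Rα' : K := Rgen p e Ai α' with hRα'def
  set R₁γ : K := Rgen p (e - 1) c ua' with hR₁γdef
  set fω' : K := fgen p e Ai α' α with hfω'def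
  set κ : K := α⁻¹ * (2 * b' * α' - fω') with hκdef
  set r' : K := α⁻¹ * α' with hr'def
  set δ' : K := -(α⁻¹ * α') * (b' * α' - fω') with hδ'def
  set E₁ : K := Egen p (e - 1) c ua' with hE₁def
  -- polynomial abbreviations
  set f' : K[X] := fgen p e AC X (C α') with hf'def
  set f₁ : K[X] := fgen p (e - 1) cC uX (C ua') with hf₁def
  set Dσ : K[X] := -(C α⁻¹ * (X + C α')) * (C b' * (X + C α') - (fXα + C fω')) with hDσdef
  set W : K[X] := f' + C κ * X - C r' * fXα - f₁ with hWdef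
  -- freshman's dream in K[X]
  have hadd1 : ∀ u v : K[X], (u + v) ^ p = u ^ p + v ^ p := fun u v => by
    simpa using pow_p_add p₀ hpn u v 1
  have hsub1 : ∀ u v : K[X], (u - v) ^ p = u ^ p - v ^ p := fun u v => by
    simpa using pow_p_sub p₀ hpn u v 1
  -- C-collapsing lemmas
  have hRgenC : ∀ (d : ℕ) (sc : ℕ → K) (t : K),
      Rgen p d (fun i => Polynomial.C (sc i)) (Polynomial.C t) = C (Rgen p d sc t) :=
    fun d sc t => (map_Rgen (C : K →+* K[X]) p d sc t).symm
  have hEgenC : ∀ (d : ℕ) (sc : ℕ → K) (t : K),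
      Egen p d (fun i => Polynomial.C (sc i)) (Polynomial.C t) = C (Egen p d sc t) :=
    fun d sc t => (map_Egen (C : K →+* K[X]) p d sc t).symm
  have hfgenC : ∀ (d : ℕ) (sc : ℕ → K) (t u : K),
      fgen p d (fun i => Polynomial.C (sc i)) (Polynomial.C t) (Polynomial.C u)
        = C (fgen p d sc t u) :=
    fun d sc t u => (map_fgen (C : K →+* K[X]) p d sc t u).symm
  -- the substitution X ↦ X + C α'
  have H2 : (X + C α') * (RX + C Rα') = (uX + C ua') * (R₁u + C R₁γ) + Dσ ^ p - Dσ := by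
    set σ : K[X] →+* K[X] := eval₂RingHom (C : K →+* K[X]) (X + C α') with hσdef
    have hσC : ∀ t : K, σ (C t) = C t := fun t => eval₂_C _ _
    have hσX : σ X = X + C α' := eval₂_X _ _
    have hσAC : (fun i => σ (AC i)) = AC := by
      funext i
      rw [hACdef]
      exact eval₂_C _ _
    have hσcC : (fun i => σ (cC i)) = cC := by
      funext i
      rw [hcCdef]
      exact eval₂_C _ _
    have hσRX : σ RX = RX + C Rα' := by
      rw [hRXdef, map_Rgen σ, hσAC, hσX, Rgen_add p₀ hpn, hACAi, hRgenC, hRα'def]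
    have hσuX : σ uX = uX + C ua' := by
      rw [huXdef, map_sub, map_pow, map_mul, hσC, hσX, hadd1, hua]
      simp only [map_pow, map_sub, map_mul]
      ring
    have hσR₁u : σ R₁u = R₁u + C R₁γ := by
      rw [hR₁udef, map_Rgen σ, hσcC, hσuX, Rgen_add p₀ hpn, hcCdef, hRgenC, hR₁γdef]
    have hσfXα : σ fXα = fXα + C fω' := by
      rw [hfXαdef, map_fgen σ, hσAC, hσX, hσC, fgen_add_left p₀ hpn, hACAi, hfgenC, hfω'def]
    have hσD : σ D = Dσ := by
      rw [hDdef, map_mul, map_neg, map_mul, hσC, hσX, map_sub, map_mul, hσC, hσX, hσfXα,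
        hDσdef]
    have h := congrArg σ hc'
    rw [map_mul, map_sub, map_add, map_mul, map_pow, hσRX, hσuX, hσR₁u, hσD, hσX] at h
    exact h
  -- evaluation of hc at α'
  have H3C : C α' * C Rα' = C ua' * C R₁γ + (C δ') ^ p - C δ' := by
    set ev : K[X] →+* K := evalRingHom α' with hevdef
    have hevC : ∀ t : K, ev (C t) = t := fun t => eval_C
    have hevX : ev X = α' := eval_X
    have hevAC : (fun i => ev (AC i)) = Ai := by
      funext i
      rw [hACdef, hAidef]
      exact eval_C
    have hevcC : (fun i => ev (cC i)) = c := by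
      funext i
      rw [hcCdef]
      exact eval_C
    have hevRX : ev RX = Rα' := by
      rw [hRXdef, map_Rgen ev, hevAC, hevX, hRα'def]
    have hevuX : ev uX = ua' := by
      rw [huXdef, map_sub, map_pow, map_mul, hevC, hevX, hua]
    have hevR₁u : ev R₁u = R₁γ := by
      rw [hR₁udef, map_Rgen ev, hevcC, hevuX, hR₁γdef]
    have hevfXα : ev fXα = fω' := by
      rw [hfXαdef, map_fgen ev, hevAC, hevX, hevC, hfω'def]
    have hevD : ev D = δ' := by
      rw [hDdef, map_mul, map_neg, map_mul, hevC, hevX, map_sub, map_mul, hevC, hevX, hevfXα,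
        hδ'def, hb'def]
    have h := congrArg ev hc'
    rw [map_mul, map_sub, map_add, map_mul, map_pow, hevRX, hevuX, hevR₁u, hevD, hevX] at h
    have h2 := congrArg (C : K →+* K[X]) h
    rw [map_mul, map_sub, map_add, map_mul, map_pow] at h2
    exact h2
  -- the three instances of the key identity
  have H4 : f' ^ p - f' = X * C Rα' + C α' * RX := by
    have hEC : Egen p e AC (C α') = 0 := by
      rw [hACAi, hEgenC, hα'V, map_zero]
    have hRC : Rgen p e AC (C α') = C Rα' := by
      rw [hACAi, hRgenC, hRα'def]
    have h := lemmaA p₀ hpn hoddp e AC X (C α')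
    rw [hEC, mul_zero, sub_zero, hRC, ← hRXdef, ← hf'def] at h
    exact h
  have H5 : f₁ ^ p - f₁ = uX * C R₁γ + C ua' * R₁u - uX ^ p ^ (e - 1) * C E₁ := by
    have hEC : Egen p (e - 1) cC (C ua') = C E₁ := by
      rw [hcCdef, hEgenC, hE₁def]
    have hRC : Rgen p (e - 1) cC (C ua') = C R₁γ := by
      rw [hcCdef, hRgenC, hR₁γdef]
    have h := lemmaA p₀ hpn hoddp (e - 1) cC uX (C ua')
    rw [hEC, hRC, ← hR₁udef, ← hf₁def] at h
    exact h
  -- the quadratic cancellation identity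
  have H6 : D - Dσ + C δ' = C κ * X - C r' * fXα := by
    rw [hDdef, hDσdef, hδ'def, hκdef, hr'def]
    simp only [map_mul, map_sub, map_add, map_neg, map_ofNat]
    ring
  have hpow : C (κ ^ p) * X ^ p - C (r' ^ p) * fXα ^ p = D ^ p - Dσ ^ p + (C δ') ^ p := by
    have h1 : (D - Dσ + C δ') ^ p = D ^ p - Dσ ^ p + (C δ') ^ p := by
      rw [hadd1, hsub1]
    have h2 : (C κ * X - C r' * fXα) ^ p = C (κ ^ p) * X ^ p - C (r' ^ p) * fXα ^ p := by
      rw [hsub1, mul_pow, mul_pow, ← map_pow, ← map_pow]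
    rw [← h2, ← H6, h1]
  have hWp : W ^ p = f' ^ p + C (κ ^ p) * X ^ p - C (r' ^ p) * fXα ^ p - f₁ ^ p := by
    rw [hWdef, hsub1, hsub1, hadd1, mul_pow, mul_pow, ← map_pow, ← map_pow]
  -- the master identity
  have hdagger : W ^ p - W = uX ^ p ^ (e - 1) * C E₁ := by
    linear_combination hWp + H4 - H5 + H2 - hc' - H3C + hpow + H6 - hWdef
  -- shape of W
  have hvX : ∀ k, PShape p ((X : K[X]) ^ p ^ k) := fun k => PShape.Xpow k
  have hvU : ∀ k, PShape p (uX ^ p ^ k) := by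
    intro k
    rw [huXdef, pow_p_sub p₀ hpn]
    have h1 : ((X : K[X]) ^ p) ^ p ^ k = X ^ p ^ (k + 1) := by
      rw [← pow_mul, ← pow_succ']
    have h2 : ((C (α ^ (p - 1)) : K[X]) * X) ^ p ^ k
        = C ((α ^ (p - 1)) ^ p ^ k) * X ^ p ^ k := by
      simp only [mul_pow, map_pow]
    rw [h1, h2]
    exact (PShape.Xpow (k + 1)).sub ((PShape.Xpow k).cmul _)
  have hXshape : PShape p (X : K[X]) := by
    have h : (X : K[X]) = X ^ p ^ 0 := by rw [pow_zero, pow_one]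
    rw [h]
    exact PShape.Xpow 0
  have hshW : PShape p W := by
    rw [hWdef, hf'def, hf₁def, hfXαdef, hACAi, hcCdef]
    exact (((PShape.fgen e Ai α' X hvX).add (hXshape.cmul κ)).sub
      ((PShape.fgen e Ai α X hvX).cmul r')).sub (PShape.fgen (e - 1) c ua' uX hvU)
  -- evaluation of W at α
  have hWα : Polynomial.eval α W = 0 := by
    set ev : K[X] →+* K := evalRingHom α with hevdef
    have hevC : ∀ t : K, ev (C t) = t := fun t => eval_C
    have hevX : ev X = α := eval_X
    have hevAC : (fun i => ev (AC i)) = Ai := by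
      funext i
      rw [hACdef, hAidef]
      exact eval_C
    have hevcC : (fun i => ev (cC i)) = c := by
      funext i
      rw [hcCdef]
      exact eval_C
    have hevuX : ev uX = 0 := by
      rw [huXdef, map_sub, map_pow, map_mul, hevC, hevX]
      rw [← pow_succ, Nat.sub_add_cancel (le_trans one_le_two hp2)]
      exact sub_self _
    have hevf' : ev f' = fgen p e Ai α α' := by
      rw [hf'def, map_fgen ev, hevAC, hevX, hevC]
    have hevfXα : ev fXα = fgen p e Ai α α := by
      rw [hfXαdef, map_fgen ev, hevAC, hevX, hevC]
    have hevf₁ : ev f₁ = 0 := by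
      rw [hf₁def, map_fgen ev, hevcC, hevuX, fgen_zero_left hpne]
    have h : Polynomial.eval α W
        = fgen p e Ai α α' + κ * α - r' * fgen p e Ai α α := by
      show ev W = _
      rw [hWdef]
      simp only [map_sub, map_add, map_mul, hevC, hevX, hevf', hevfXα, hevf₁]
      ring
    rw [h]
    have hκα : κ * α = 2 * b' * α' - fω' := by
      rw [hκdef]
      field_simp
    have h2b' : 2 * b' * α' = r' * fgen p e Ai α α := by
      rw [hb'def, hr'def]
      field_simp
    linear_combination hω + hκα + h2b'
  -- apply the chase
  have huXpow : uX ^ p ^ (e - 1)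
      = X ^ p ^ ((e - 1) + 1) - C (α ^ ((p - 1) * p ^ (e - 1))) * X ^ p ^ (e - 1) := by
    rw [huXdef, pow_p_sub p₀ hpn]
    have h1 : ((X : K[X]) ^ p) ^ p ^ (e - 1) = X ^ p ^ ((e - 1) + 1) := by
      rw [← pow_mul, ← pow_succ']
    have h2 : ((C (α ^ (p - 1)) : K[X]) * X) ^ p ^ (e - 1)
        = C (α ^ ((p - 1) * p ^ (e - 1))) * X ^ p ^ (e - 1) := by
      rw [mul_pow, ← map_pow, ← pow_mul]
    rw [h1, h2]
  have hid : W ^ p - W = C E₁ * X ^ p ^ ((e - 1) + 1)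
      - C (E₁ * α ^ ((p - 1) * p ^ (e - 1))) * X ^ p ^ (e - 1) := by
    rw [hdagger, huXpow, map_mul]
    ring
  have hE₁0 : E₁ = 0 :=
    chase p₀ hpn hn (e - 1) W hshW E₁ (E₁ * α ^ ((p - 1) * p ^ (e - 1))) α hα0 rfl hid hWα
  refine ⟨hE₁0, ?_⟩
  -- second coordinate
  have h := lemmaA p₀ hpn hoddp (e - 1) c ua' ua'
  rw [← hE₁def, hE₁0, mul_zero, sub_zero, ← hR₁γdef] at h
  have h2p : (2 : K) ^ p = 2 := by
    calc (2 : K) ^ p = ((1 : K) + 1) ^ p := by norm_num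
    _ = (1 : K) ^ p + 1 ^ p := by simpa using pow_p_add p₀ hpn (1 : K) 1 1
    _ = 2 := by norm_num
  rw [div_pow, h2p]
  field_simp
  linear_combination h
end

section
/- Assume p is odd and e ≥ 1. Let A ⊆ V_R be an F_p-subspace of dimension d that is totally isotropic with respect to ω_R (i.e., ω_R(x,y) = 0 for all x,y ∈ A), with basis a_1,…,a_d over F_p. Set a := a_d, u(x) := x^p − a^{p−1}x, and let R_1 be the additive polynomial of degree p^{e−1} obtained from a as in the quotient step (so that x·R(x) = u(x)·R_1(u(x)) + Δ_0(x)^p − Δ_0(x)). Then A' := Σ_{i=1}^{d−1} F_p·u(a_i) ⊆ V_{R_1} is an F_p-subspace of dimension d−1 that is totally isotropic with respect to ω_{R_1}. -/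
open Finset Polynomial

section Aux
variable {K : Type*} [Field K] {p : ℕ} {ψ : K →+* K}

lemma pk_succ (x : K) (k : ℕ) : (x ^ p ^ k) ^ p = x ^ p ^ (k + 1) := by
  rw [← pow_mul, pow_succ]

lemma tele (w : ℕ → K) (z : K) (m : ℕ) :
    (-∑ i ∈ Finset.range m,
        ((∑ j ∈ Finset.range (m - i), w i ^ p ^ (j + 1)) + z ^ p ^ (i + 1))) -
      (-∑ i ∈ Finset.range m,
        ((∑ j ∈ Finset.range (m - i), w i ^ p ^ j) + z ^ p ^ i)) =
    -(∑ i ∈ Finset.range m, (w i ^ p ^ (m - i) - w i)) - (z ^ p ^ m - z) := by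
  rw [neg_sub_neg, ← Finset.sum_sub_distrib]
  have h2 : ∑ i ∈ Finset.range m, (z ^ p ^ (i + 1) - z ^ p ^ i) = z ^ p ^ m - z := by
    rw [Finset.sum_range_sub (f := fun i => z ^ p ^ i)]
    simp
  calc ∑ i ∈ Finset.range m,
        (((∑ j ∈ Finset.range (m - i), w i ^ p ^ j) + z ^ p ^ i) -
          ((∑ j ∈ Finset.range (m - i), w i ^ p ^ (j + 1)) + z ^ p ^ (i + 1)))
      = ∑ i ∈ Finset.range m, (-(w i ^ p ^ (m - i) - w i) - (z ^ p ^ (i + 1) - z ^ p ^ i)) := by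
        refine Finset.sum_congr rfl fun i _ => ?_
        have h1 : ∑ j ∈ Finset.range (m - i), (w i ^ p ^ (j + 1) - w i ^ p ^ j) =
            w i ^ p ^ (m - i) - w i := by
          rw [Finset.sum_range_sub (f := fun j => w i ^ p ^ j)]
          simp
        rw [Finset.sum_sub_distrib] at h1
        linear_combination -h1
    _ = _ := by
        rw [Finset.sum_sub_distrib, Finset.sum_neg_distrib, h2]

lemma star (hψ : ∀ x : K, ψ x = x ^ p) (m : ℕ) (s : ℕ → K) (x y : K) :
    fgen p m s x y ^ p - fgen p m s x y =
      x * Rgen p m s y + y * Rgen p m s x - x ^ p ^ m * Egen p m s y := by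
  have hfp : fgen p m s x y ^ p =
      -∑ i ∈ Finset.range m,
        ((∑ j ∈ Finset.range (m - i), (s i * x ^ p ^ i * y) ^ p ^ (j + 1)) +
          (x * Rgen p m s y) ^ p ^ (i + 1)) := by
    rw [← hψ, fgen, map_neg, map_sum]
    congr 1
    refine Finset.sum_congr rfl fun i _ => ?_
    rw [map_add, map_sum]
    congr 1
    · exact Finset.sum_congr rfl fun j _ => by rw [hψ, pk_succ]
    · rw [hψ, pk_succ]
  rw [hfp, fgen]
  rw [tele (w := fun i => s i * x ^ p ^ i * y) (z := x * Rgen p m s y)]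
  -- now pure algebra
  have hyR : y * Rgen p m s x = ∑ i ∈ Finset.range (m + 1), s i * x ^ p ^ i * y := by
    rw [Rgen, Finset.mul_sum]; exact Finset.sum_congr rfl fun i _ => by ring
  have hEg : x ^ p ^ m * Egen p m s y =
      (x * Rgen p m s y) ^ p ^ m +
        ∑ i ∈ Finset.range (m + 1), (s i * x ^ p ^ i * y) ^ p ^ (m - i) := by
    rw [Egen, mul_add, mul_pow, Finset.mul_sum]
    congr 1
    refine Finset.sum_congr rfl fun i hi => ?_
    have hi' : i ≤ m := Nat.lt_succ_iff.mp (Finset.mem_range.mp hi)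
    have : (x ^ p ^ i) ^ p ^ (m - i) = x ^ p ^ m := by
      rw [← pow_mul, ← pow_add, Nat.add_sub_cancel' hi']
    rw [mul_pow, mul_pow, ← this]
    ring
  rw [hyR, hEg, Finset.sum_range_succ, Finset.sum_range_succ (f := fun i => (s i * x ^ p ^ i * y) ^ p ^ (m - i))]
  simp only [Nat.sub_self, pow_zero, pow_one, Finset.sum_sub_distrib]
  ring

end Aux

section APF
variable {K : Type*} [Field K] {p : ℕ} {ψ : K →+* K}

/-- `φ` is an additive polynomial function of degree `< p^m`. -/
def APF (p m : ℕ) (φ : K → K) : Prop :=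
  ∃ g : ℕ → K, ∀ x, φ x = ∑ k ∈ Finset.range m, g k * x ^ p ^ k

lemma APF.add {m : ℕ} {φ χ : K → K} (hφ : APF p m φ) (hχ : APF p m χ) :
    APF p m (fun x => φ x + χ x) := by
  obtain ⟨g, hg⟩ := hφ; obtain ⟨h, hh⟩ := hχ
  exact ⟨g + h, fun x => by
    simp only [hg, hh, Pi.add_apply, add_mul, Finset.sum_add_distrib]⟩

lemma APF.neg {m : ℕ} {φ : K → K} (hφ : APF p m φ) : APF p m (fun x => -φ x) := by
  obtain ⟨g, hg⟩ := hφ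
  exact ⟨-g, fun x => by simp [hg, Finset.sum_neg_distrib]⟩

lemma APF.sub {m : ℕ} {φ χ : K → K} (hφ : APF p m φ) (hχ : APF p m χ) :
    APF p m (fun x => φ x - χ x) := by
  simpa [sub_eq_add_neg] using hφ.add hχ.neg

lemma APF.const_mul {m : ℕ} {φ : K → K} (c : K) (hφ : APF p m φ) :
    APF p m (fun x => c * φ x) := by
  obtain ⟨g, hg⟩ := hφ
  exact ⟨fun k => c * g k, fun x => by
    simp only [hg, Finset.mul_sum, mul_assoc]⟩

lemma APF.monomial {m k : ℕ} (hk : k < m) (c : K) : APF p m (fun x : K => c * x ^ p ^ k) := by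
  refine ⟨fun k' => if k' = k then c else 0, fun x => ?_⟩
  rw [Finset.sum_eq_single k]
  · simp
  · intro b _ hb; simp [hb]
  · intro h; exact absurd (Finset.mem_range.mpr hk) h

lemma APF.sum {m : ℕ} {ι : Type*} (t : Finset ι) (φ : ι → K → K)
    (h : ∀ i ∈ t, APF p m (φ i)) : APF p m (fun x => ∑ i ∈ t, φ i x) := by
  classical
  induction t using Finset.induction_on with
  | empty => exact ⟨0, by simp⟩
  | insert a t hni ih =>
    simp only [Finset.sum_insert hni]
    exact (h a (Finset.mem_insert_self a t)).add
      (ih fun i hi => h i (Finset.mem_insert_of_mem hi))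

lemma frob_sub_pk (hψ : ∀ x : K, ψ x = x ^ p) (k : ℕ) (x y : K) :
    (x - y) ^ p ^ k = x ^ p ^ k - y ^ p ^ k := by
  induction k with
  | zero => simp
  | succ k ih =>
    rw [← pk_succ, ih, ← hψ, map_sub, hψ, hψ, pk_succ, pk_succ]

lemma hp_ne_zero (hψ : ∀ x : K, ψ x = x ^ p) : p ≠ 0 := by
  intro h
  subst h
  have h0 := hψ 0
  rw [map_zero, pow_zero] at h0
  exact zero_ne_one h0

lemma frob_neg_pk (hψ : ∀ x : K, ψ x = x ^ p) (k : ℕ) (y : K) :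
    (-y) ^ p ^ k = -(y ^ p ^ k) := by
  rw [← zero_sub y, frob_sub_pk hψ, zero_pow (pow_ne_zero k (hp_ne_zero hψ)), zero_sub]

lemma frob_add_pk (hψ : ∀ x : K, ψ x = x ^ p) (k : ℕ) (x y : K) :
    (x + y) ^ p ^ k = x ^ p ^ k + y ^ p ^ k := by
  have h2 := frob_sub_pk hψ k x (-y)
  rw [sub_neg_eq_add, frob_neg_pk hψ, sub_neg_eq_add] at h2
  exact h2

lemma APF.congr' {m : ℕ} {φ χ : K → K} (hφ : APF p m φ) (h : ∀ x, χ x = φ x) :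
    APF p m χ := by
  obtain ⟨g, hg⟩ := hφ; exact ⟨g, fun x => (h x).trans (hg x)⟩

lemma APF.comp_u (hψ : ∀ x : K, ψ x = x ^ p) {m : ℕ} {φ : K → K} (t : K) (hφ : APF p m φ) :
    APF p (m + 1) (fun x => φ (x ^ p - t * x)) := by
  obtain ⟨g, hg⟩ := hφ
  have : ∀ x : K, φ (x ^ p - t * x) =
      ∑ k ∈ Finset.range m, (g k * x ^ p ^ (k + 1) + (-(g k * t ^ p ^ k)) * x ^ p ^ k) := by
    intro x
    rw [hg]
    refine Finset.sum_congr rfl fun k _ => ?_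
    rw [frob_sub_pk hψ k, mul_pow, mul_sub]
    have : (x ^ p) ^ p ^ k = x ^ p ^ (k + 1) := by
      rw [← pow_mul, ← pow_succ']
    rw [this]; ring
  refine APF.congr' (APF.sum (Finset.range m) _ fun k hk => ?_) this
  exact (APF.monomial (by simp at hk; omega) (g k)).add
      (APF.monomial (by simp at hk; omega) (-(g k * t ^ p ^ k)))

lemma apf_unique [Infinite K] (hp : 2 ≤ p) {m : ℕ} (g h : ℕ → K)
    (H : ∀ x : K, ∑ k ∈ Finset.range m, g k * x ^ p ^ k =
      ∑ k ∈ Finset.range m, h k * x ^ p ^ k) :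
    ∀ k < m, g k = h k := by
  intro k hk
  set P : Polynomial K := ∑ k ∈ Finset.range m, Polynomial.C (g k - h k) * Polynomial.X ^ p ^ k
    with hP
  have hev : ∀ x : K, P.eval x = 0 := by
    intro x
    simp only [hP, Polynomial.eval_finset_sum, Polynomial.eval_mul, Polynomial.eval_C,
      Polynomial.eval_pow, Polynomial.eval_X, sub_mul]
    rw [Finset.sum_sub_distrib, H x, sub_self]
  have hP0 : P = 0 := by
    apply Polynomial.funext; intro x; rw [hev, Polynomial.eval_zero]
  have hco : P.coeff (p ^ k) = g k - h k := by
    rw [hP, Polynomial.finset_sum_coeff]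
    rw [Finset.sum_eq_single k]
    · rw [Polynomial.coeff_C_mul, Polynomial.coeff_X_pow, if_pos rfl, mul_one]
    · intro b _ hb
      rw [Polynomial.coeff_C_mul, Polynomial.coeff_X_pow, if_neg, mul_zero]
      exact fun hc => hb (Nat.pow_right_injective hp hc.symm)
    · intro hc; exact absurd (Finset.mem_range.mpr hk) hc
  rw [hP0, Polynomial.coeff_zero] at hco
  have := sub_eq_zero.mp hco.symm
  exact this

end APF

section Struct
variable {K : Type*} [Field K] {p : ℕ} {ψ : K →+* K}

lemma fixpow {c : K} (hc : c ^ p = c) (k : ℕ) : c ^ p ^ k = c := by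
  induction k with
  | zero => simp
  | succ k ih => rw [← pk_succ, ih, hc]

lemma Rgen_add_s10 (hψ : ∀ x : K, ψ x = x ^ p) (m : ℕ) (s : ℕ → K) (x y : K) :
    Rgen p m s (x + y) = Rgen p m s x + Rgen p m s y := by
  rw [Rgen, Rgen, Rgen, ← Finset.sum_add_distrib]
  exact Finset.sum_congr rfl fun i _ => by rw [frob_add_pk hψ, mul_add]

lemma Rgen_zero (hψ : ∀ x : K, ψ x = x ^ p) (m : ℕ) (s : ℕ → K) :
    Rgen p m s 0 = 0 := by
  rw [Rgen]
  refine Finset.sum_eq_zero fun i _ => ?_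
  rw [zero_pow (pow_ne_zero i (hp_ne_zero hψ)), mul_zero]

lemma Rgen_smul (hψ : ∀ x : K, ψ x = x ^ p) (m : ℕ) (s : ℕ → K) {c : K} (hc : c ^ p = c)
    (x : K) : Rgen p m s (c * x) = c * Rgen p m s x := by
  rw [Rgen, Rgen, Finset.mul_sum]
  refine Finset.sum_congr rfl fun i _ => ?_
  rw [mul_pow, fixpow hc]
  ring

lemma fgen_add_left_s10 (hψ : ∀ x : K, ψ x = x ^ p) (m : ℕ) (s : ℕ → K) (x x' y : K) :
    fgen p m s (x + x') y = fgen p m s x y + fgen p m s x' y := by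
  rw [fgen, fgen, fgen, ← neg_add, ← Finset.sum_add_distrib]
  congr 1
  refine Finset.sum_congr rfl fun i _ => ?_
  have h1 : ∀ j, (s i * (x + x') ^ p ^ i * y) ^ p ^ j =
      (s i * x ^ p ^ i * y) ^ p ^ j + (s i * x' ^ p ^ i * y) ^ p ^ j := by
    intro j
    rw [frob_add_pk hψ i x x', show s i * (x ^ p ^ i + x' ^ p ^ i) * y =
      s i * x ^ p ^ i * y + s i * x' ^ p ^ i * y from by ring, frob_add_pk hψ]
  have h2 : ((x + x') * Rgen p m s y) ^ p ^ i =
      (x * Rgen p m s y) ^ p ^ i + (x' * Rgen p m s y) ^ p ^ i := by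
    rw [add_mul, frob_add_pk hψ]
  rw [h2, show (∑ j ∈ Finset.range (m - i), (s i * (x + x') ^ p ^ i * y) ^ p ^ j) =
      ∑ j ∈ Finset.range (m - i),
        ((s i * x ^ p ^ i * y) ^ p ^ j + (s i * x' ^ p ^ i * y) ^ p ^ j) from
    Finset.sum_congr rfl fun j _ => h1 j, Finset.sum_add_distrib]
  ring

lemma fgen_zero_left_s10 (hψ : ∀ x : K, ψ x = x ^ p) (m : ℕ) (s : ℕ → K) (y : K) :
    fgen p m s 0 y = 0 := by
  rw [fgen, neg_eq_zero]
  refine Finset.sum_eq_zero fun i _ => ?_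
  have hp0 := hp_ne_zero hψ
  have h0 : ∀ k : ℕ, (0:K) ^ p ^ k = 0 := fun k => zero_pow (pow_ne_zero k hp0)
  simp [h0]

end Struct

section Struct2
variable {K : Type*} [Field K] {p : ℕ} {ψ : K →+* K}

lemma fgen_left_APF (m : ℕ) (s : ℕ → K) (y : K) :
    APF p m (fun x => fgen p m s x y) := by
  have hrepr : ∀ x, fgen p m s x y =
      -∑ i ∈ Finset.range m,
        ((∑ j ∈ Finset.range (m - i), (s i * y) ^ p ^ j * x ^ p ^ (i + j)) +
          Rgen p m s y ^ p ^ i * x ^ p ^ i) := by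
    intro x
    rw [fgen]
    congr 1
    refine Finset.sum_congr rfl fun i _ => ?_
    congr 1
    · refine Finset.sum_congr rfl fun j _ => ?_
      rw [show s i * x ^ p ^ i * y = s i * y * x ^ p ^ i from by ring, mul_pow,
        ← pow_mul, ← pow_add]
    · rw [mul_pow]; ring
  refine APF.congr' (APF.neg (APF.sum (Finset.range m) _ fun i hi => ?_)) hrepr
  have him : i < m := Finset.mem_range.mp hi
  exact (APF.sum (Finset.range (m - i)) _ fun j hj =>
      APF.monomial (by have := Finset.mem_range.mp hj; omega) _).add
    (APF.monomial him _)

lemma eval_Rgen (m : ℕ) (b : ℕ → K) (Q : Polynomial K) (x : K) :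
    (Rgen p m (fun i => Polynomial.C (b i)) Q).eval x = Rgen p m b (Q.eval x) := by
  rw [Rgen, Rgen, Polynomial.eval_finset_sum]
  exact Finset.sum_congr rfl fun i _ => by simp

lemma eval_fgen (m : ℕ) (b : ℕ → K) (Q S : Polynomial K) (x : K) :
    (fgen p m (fun i => Polynomial.C (b i)) Q S).eval x = fgen p m b (Q.eval x) (S.eval x) := by
  rw [fgen, fgen]
  rw [Polynomial.eval_neg, Polynomial.eval_finset_sum]
  congr 1
  refine Finset.sum_congr rfl fun i _ => ?_
  simp [Polynomial.eval_finset_sum, eval_Rgen]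

end Struct2
/-- if `A ⊆ V_R` is a totally isotropic `F_p`-subspace of dimension `d` with
basis `a_1,…,a_d`, `a := a_d`, and `R₁` is obtained from `a` by the quotient step, then
`A' := Σ_{i=1}^{d−1} F_p·u(a_i) ⊆ V_{R₁}` is a totally isotropic `F_p`-subspace of
dimension `d−1` with respect to `ω_{R₁}`. -/
theorem statement10 {Fp F K : Type*} [Field Fp] [Fintype Fp] [Field F] [Fintype F]
    [Field K] [IsAlgClosed K] [Algebra F K] [Algebra Fp K]
    (p₀ n p s q e : ℕ) (hp₀ : p₀.Prime) (hodd : Odd p₀) [CharP F p₀]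
    (hn : 0 < n) (hpn : p = p₀ ^ n) (hs : 0 < s) (hq : q = p ^ s)
    (hcardp : Fintype.card Fp = p) (hcard : Fintype.card F = q)
    (a : ℕ → F) (hae : a e ≠ 0) (he : 1 ≤ e)
    -- `A ⊆ V_R` a totally isotropic `F_p`-subspace of dimension `d`, basis `a_1,…,a_d = v`
    (d : ℕ) (hd : 0 < d) (A : Submodule Fp K) (v : Fin d → K)
    (hindep : LinearIndependent Fp v) (hspan : Submodule.span Fp (Set.range v) = A)
    (hdim : Module.finrank Fp A = d)
    (hAV : ∀ x ∈ A, Egen p e (fun i => algebraMap F K (a i)) x = 0)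
    (hiso : ∀ x ∈ A, ∀ y ∈ A, fgen p e (fun i => algebraMap F K (a i)) x y =
      fgen p e (fun i => algebraMap F K (a i)) y x)
    -- `a := a_d`
    (α : K) (hα : α = v ⟨d - 1, by omega⟩)
    -- `R₁(z) = ∑_{i=0}^{e-1} c_i z^{p^i}`, the additive polynomial of the quotient step for `a`
    (c : ℕ → K)
    (hc : Polynomial.X * Rgen p e (fun i => Polynomial.C (algebraMap F K (a i))) Polynomial.X =
      (Polynomial.X ^ p - Polynomial.C (α ^ (p - 1)) * Polynomial.X) *
        Rgen p (e - 1) (fun i => Polynomial.C (c i))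
          (Polynomial.X ^ p - Polynomial.C (α ^ (p - 1)) * Polynomial.X) +
      (-(Polynomial.C α⁻¹ * Polynomial.X) *
        (Polynomial.C (fgen p e (fun i => algebraMap F K (a i)) α α / 2 / α) * Polynomial.X -
          fgen p e (fun i => Polynomial.C (algebraMap F K (a i))) Polynomial.X
            (Polynomial.C α))) ^ p -
      -(Polynomial.C α⁻¹ * Polynomial.X) *
        (Polynomial.C (fgen p e (fun i => algebraMap F K (a i)) α α / 2 / α) * Polynomial.X -
          fgen p e (fun i => Polynomial.C (algebraMap F K (a i))) Polynomial.X
            (Polynomial.C α))) :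
    let u : K → K := fun x => x ^ p - α ^ (p - 1) * x
    let A' : Submodule Fp K :=
      Submodule.span Fp (Set.range fun i : Fin (d - 1) => u (v (Fin.castLE (by omega) i)))
    (∀ x ∈ A', Egen p (e - 1) c x = 0) ∧
    Module.finrank Fp A' = d - 1 ∧
    (∀ x ∈ A', ∀ y ∈ A', fgen p (e - 1) c x y = fgen p (e - 1) c y x) := by
  intro u A'
  classical
  haveI : CharP K p₀ := charP_of_injective_algebraMap (algebraMap F K).injective p₀
  haveI : Fact p₀.Prime := ⟨hp₀⟩
  have hu : u = fun x : K => x ^ p - α ^ (p - 1) * x := rfl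
  have hA' : A' = Submodule.span Fp
      (Set.range fun i : Fin (d - 1) => u (v (Fin.castLE (by omega) i))) := rfl
  set ψ : K →+* K := iterateFrobenius K p₀ n with hψd
  have hψ : ∀ x : K, ψ x = x ^ p := by
    intro x; rw [hψd, iterateFrobenius_def, ← hpn]
  have hp2 : 2 ≤ p := by
    have h2 := hp₀.two_le
    have h3 : p₀ ≤ p₀ ^ n := Nat.le_self_pow (by omega) p₀
    omega
  have hp1 : p ≠ 0 := by omega
  have hfr : ∀ x y : K, (x + y) ^ p = x ^ p + y ^ p := fun x y => by
    simpa using frob_add_pk hψ 1 x y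
  have hfs : ∀ x y : K, (x - y) ^ p = x ^ p - y ^ p := fun x y => by
    simpa using frob_sub_pk hψ 1 x y
  have hvA : ∀ i : Fin d, v i ∈ A := fun i => hspan ▸ Submodule.subset_span ⟨i, rfl⟩
  have hαA : α ∈ A := hα ▸ hvA _
  have hα0 : α ≠ 0 := by rw [hα]; exact hindep.ne_zero _
  have h2K : (2 : K) ≠ 0 := by
    have : ¬ (p₀ ∣ 2) := by
      intro hdvd
      have := Nat.le_of_dvd (by omega) hdvd
      have h4 : p₀ ≠ 2 := by
        intro h
        rw [h] at hodd
        exact (by decide : ¬ Odd 2) hodd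
      have h2 := hp₀.two_le
      omega
    intro h2
    exact this ((CharP.cast_eq_zero_iff K p₀ 2).mp (by exact_mod_cast h2))
  have hfixFp : ∀ μ : Fp, (algebraMap Fp K μ) ^ p = algebraMap Fp K μ := by
    intro μ
    rw [← map_pow]
    congr 1
    rw [← hcardp]
    exact FiniteField.pow_card μ
  have hαp : α ^ (p - 1) * α = α ^ p := by
    rw [← pow_succ]
    congr 1
    omega
  set aK : ℕ → K := fun i => algebraMap F K (a i) with haK
  set b2 : K := fgen p e aK α α / 2 / α with hb2
  set Δ : K → K := fun x => -(α⁻¹ * x) * (b2 * x - fgen p e aK x α) with hΔ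
  set B : K → K → K := fun x y =>
    -α⁻¹ * (2 * b2 * x * y - x * fgen p e aK y α - y * fgen p e aK x α) with hB
  -- pointwise form of hc
  have hpt : ∀ x : K, x * Rgen p e aK x =
      u x * Rgen p (e - 1) c (u x) + Δ x ^ p - Δ x := by
    intro x
    have h := congrArg (Polynomial.eval x) hc
    simp only [Polynomial.eval_mul, Polynomial.eval_add, Polynomial.eval_sub,
      Polynomial.eval_pow, Polynomial.eval_neg, Polynomial.eval_X, Polynomial.eval_C,
      eval_Rgen, eval_fgen] at h
    simp only [hu, hΔ, hb2, ← haK]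
    exact h
  -- polarization
  have hΔadd : ∀ x y : K, Δ (x + y) = Δ x + Δ y + B x y := by
    intro x y
    simp only [hΔ, hB]
    rw [fgen_add_left_s10 hψ]
    ring
  have huadd : ∀ x y : K, u (x + y) = u x + u y := by
    intro x y
    simp only [hu]
    rw [hfr]
    ring
  have polar : ∀ x y : K, x * Rgen p e aK y + y * Rgen p e aK x =
      u x * Rgen p (e - 1) c (u y) + u y * Rgen p (e - 1) c (u x) +
        (B x y ^ p - B x y) := by
    intro x y
    have h1 := hpt (x + y)
    rw [huadd, Rgen_add_s10 hψ, Rgen_add_s10 hψ, hΔadd, hfr, hfr] at h1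
    linear_combination h1 - hpt x - hpt y
  -- the main lemma
  have main : ∀ γ ∈ A, Egen p (e - 1) c (u γ) = 0 ∧
      ∀ x : K, fgen p e aK x γ - B x γ = fgen p (e - 1) c (u x) (u γ) := by
    intro γ hγ
    set Fφ : K → K := fun x =>
      fgen p e aK x γ - B x γ - fgen p (e - 1) c (u x) (u γ) with hFφ
    set D : K := Egen p (e - 1) c (u γ) with hD
    have hupow : ∀ x : K, u x ^ p ^ (e - 1) =
        x ^ p ^ e - (α ^ (p - 1)) ^ p ^ (e - 1) * x ^ p ^ (e - 1) := by
      intro x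
      simp only [hu]
      rw [frob_sub_pk hψ, mul_pow, ← pow_mul]
      congr 2
      rw [← pow_succ']
      congr 1
      omega
    have hdia : ∀ x : K, Fφ x ^ p - Fφ x =
        D * (x ^ p ^ e - (α ^ (p - 1)) ^ p ^ (e - 1) * x ^ p ^ (e - 1)) := by
      intro x
      have s1 := star hψ e aK x γ
      rw [hAV γ hγ, mul_zero] at s1
      have s2 := star hψ (e - 1) c (u x) (u γ)
      rw [← hD, hupow x] at s2
      have s3 := polar x γ
      simp only [hFφ]
      rw [hfs, hfs]
      linear_combination s1 + s3 - s2
    -- Fφ is an additive polynomial function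
    have hBapf : APF p e (fun x => B x γ) := by
      have hrep : ∀ x : K, B x γ =
          (-α⁻¹ * (2 * b2 * γ) + α⁻¹ * fgen p e aK γ α) * x ^ p ^ 0 +
            α⁻¹ * γ * fgen p e aK x α := by
        intro x
        simp only [hB, pow_zero, pow_one]
        ring
      exact APF.congr'
        ((APF.monomial (by omega) _).add ((fgen_left_APF e aK α).const_mul _)) hrep
    have hcomp : APF p e (fun x => fgen p (e - 1) c (u x) (u γ)) := by
      have h1 := APF.comp_u hψ (α ^ (p - 1)) (fgen_left_APF (e - 1) c (u γ))
      rw [show e - 1 + 1 = e from by omega] at h1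
      exact APF.congr' h1 (fun x => by simp only [hu])
    have hFapf : APF p e Fφ :=
      ((fgen_left_APF e aK γ).sub hBapf).sub hcomp
    obtain ⟨g, hg⟩ := hFapf
    -- coefficient extraction
    have hL : ∀ x : K, ∑ k ∈ Finset.range (e + 1),
        ((if k = 0 then 0 else g (k - 1) ^ p) - (if k = e then 0 else g k)) * x ^ p ^ k =
        Fφ x ^ p - Fφ x := by
      intro x
      rw [hg x]
      have hpow : (∑ k ∈ Finset.range e, g k * x ^ p ^ k) ^ p =
          ∑ k ∈ Finset.range e, g k ^ p * x ^ p ^ (k + 1) := by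
        rw [← hψ, map_sum]
        exact Finset.sum_congr rfl fun k _ => by rw [map_mul, hψ, hψ, pk_succ]
      rw [hpow]
      simp only [sub_mul, Finset.sum_sub_distrib]
      rw [Finset.sum_range_succ' (f := fun k => (if k = 0 then (0:K) else g (k - 1) ^ p) * x ^ p ^ k)]
      rw [Finset.sum_range_succ (f := fun k => (if k = e then (0:K) else g k) * x ^ p ^ k)]
      have h1 : ∀ k ∈ Finset.range e,
          (if k + 1 = 0 then (0:K) else g (k + 1 - 1) ^ p) * x ^ p ^ (k + 1) =
          g k ^ p * x ^ p ^ (k + 1) := by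
        intro k _
        simp
      have h2 : ∀ k ∈ Finset.range e,
          (if k = e then (0:K) else g k) * x ^ p ^ k = g k * x ^ p ^ k := by
        intro k hk
        rw [if_neg (by have := Finset.mem_range.mp hk; omega)]
      rw [Finset.sum_congr rfl h1, Finset.sum_congr rfl h2]
      simp only [if_true, zero_mul, add_zero]
    have hR : ∀ x : K, ∑ k ∈ Finset.range (e + 1),
        (if k = e then D else if k = e - 1 then -(D * (α ^ (p - 1)) ^ p ^ (e - 1)) else 0)
          * x ^ p ^ k =
        D * (x ^ p ^ e - (α ^ (p - 1)) ^ p ^ (e - 1) * x ^ p ^ (e - 1)) := by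
      intro x
      rw [Finset.sum_range_succ, if_pos rfl]
      have h1 : ∀ k ∈ Finset.range e,
          (if k = e then D else if k = e - 1 then -(D * (α ^ (p - 1)) ^ p ^ (e - 1)) else 0)
            * x ^ p ^ k =
          if k = e - 1 then -(D * (α ^ (p - 1)) ^ p ^ (e - 1)) * x ^ p ^ k else 0 := by
        intro k hk
        rw [if_neg (by have := Finset.mem_range.mp hk; omega), ite_mul, zero_mul]
      rw [Finset.sum_congr rfl h1, Finset.sum_ite_eq' (Finset.range e) (e - 1)
        (fun k => -(D * (α ^ (p - 1)) ^ p ^ (e - 1)) * x ^ p ^ k),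
        if_pos (Finset.mem_range.mpr (by omega))]
      ring
    have hLR : ∀ k < e + 1,
        ((if k = 0 then (0:K) else g (k - 1) ^ p) - (if k = e then 0 else g k)) =
        (if k = e then D else if k = e - 1 then -(D * (α ^ (p - 1)) ^ p ^ (e - 1)) else 0) :=
      apf_unique hp2 _ _ (fun x => by rw [hL x, hR x, ← hdia x])
    -- vanishing chain
    have hgz : ∀ k, k < e - 1 → g k = 0 := by
      intro k
      induction k using Nat.strong_induction_on with
      | _ k ih =>
        intro hk
        have h := hLR k (by omega)
        have hne : k ≠ e := by omega
        have hne1 : k ≠ e - 1 := by omega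
        rw [if_neg hne, if_neg hne, if_neg hne1] at h
        rcases Nat.eq_zero_or_pos k with h0 | h0
        · subst h0
          rw [if_pos rfl] at h
          linear_combination -h
        · rw [if_neg (by omega : ¬ k = 0)] at h
          rw [ih (k - 1) (by omega) (by omega), zero_pow hp1] at h
          linear_combination -h
    -- F(α) = 0
    have huα : u α = 0 := by
      simp only [hu]
      rw [hαp, sub_self]
    have hBαγ : B α γ = fgen p e aK γ α := by
      simp only [hB]
      have h2b : 2 * b2 * α = fgen p e aK α α := by
        rw [hb2]
        field_simp
      have hexp : (2 : K) * b2 * α * γ = fgen p e aK α α * γ := by rw [← h2b]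
      rw [hexp]
      field_simp
      ring
    have hFα : Fφ α = 0 := by
      simp only [hFφ]
      rw [huα, fgen_zero_left_s10 hψ, hBαγ, hiso α hαA γ hγ]
      ring
    have hge1 : g (e - 1) = 0 := by
      have hsum := hg α
      rw [hFα] at hsum
      have hone : ∑ k ∈ Finset.range e, g k * α ^ p ^ k = g (e - 1) * α ^ p ^ (e - 1) := by
        rw [Finset.sum_eq_single (e - 1)]
        · intro b hb hbne
          rw [hgz b (by have := Finset.mem_range.mp hb; omega), zero_mul]
        · intro hnot
          exact absurd (Finset.mem_range.mpr (by omega)) hnot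
      rw [hone] at hsum
      rcases mul_eq_zero.mp hsum.symm with h | h
      · exact h
      · exact absurd h (pow_ne_zero _ hα0)
    have hgall : ∀ k < e, g k = 0 := by
      intro k hk
      rcases Nat.lt_or_ge k (e - 1) with h | h
      · exact hgz k h
      · have hke : k = e - 1 := by omega
        rw [hke]
        exact hge1
    have hD0 : D = 0 := by
      have h := hLR e (by omega)
      rw [if_pos rfl, if_pos rfl, if_neg (show ¬ e = 0 by omega)] at h
      rw [hge1, zero_pow hp1] at h
      linear_combination -h
    refine ⟨hD0, ?_⟩
    intro x
    have hx := hg x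
    rw [Finset.sum_eq_zero (fun k hk => by
      rw [hgall k (Finset.mem_range.mp hk), zero_mul])] at hx
    simp only [hFφ] at hx
    linear_combination hx
  -- every element of A' is u of an element of A
  have hkey : ∀ x ∈ A', ∃ β ∈ A, u β = x := by
    intro x hx
    rw [hA'] at hx
    refine Submodule.span_induction ?_ ?_ ?_ ?_ hx
    · rintro y ⟨i, rfl⟩
      exact ⟨v (Fin.castLE (by omega) i), hvA _, rfl⟩
    · refine ⟨0, Submodule.zero_mem A, ?_⟩
      simp only [hu]
      rw [zero_pow hp1, mul_zero, sub_zero]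
    · rintro y z - - ⟨β, hβ, rfl⟩ ⟨β', hβ', rfl⟩
      exact ⟨β + β', A.add_mem hβ hβ', (huadd β β')⟩
    · rintro μ y - ⟨β, hβ, rfl⟩
      refine ⟨μ • β, A.smul_mem μ hβ, ?_⟩
      simp only [hu, Algebra.smul_def]
      rw [mul_pow, hfixFp]
      ring
  refine ⟨?_, ?_, ?_⟩
  · intro x hx
    obtain ⟨β, hβ, rfl⟩ := hkey x hx
    exact (main β hβ).1
  · -- finrank
    have hroot : ∀ z : K, u z = 0 → ∃ μ : Fp, z = algebraMap Fp K μ * α := by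
      intro z hz
      by_contra hcon
      push_neg at hcon
      have hQdeg : (Polynomial.X ^ p - Polynomial.C (α ^ (p - 1)) * Polynomial.X :
          Polynomial K).natDegree = p := by
        have h1 : (Polynomial.C (α ^ (p - 1)) * Polynomial.X : Polynomial K).natDegree <
            (Polynomial.X ^ p : Polynomial K).natDegree := by
          rw [Polynomial.natDegree_X_pow]
          have h2 := Polynomial.natDegree_C_mul_le (α ^ (p - 1)) (Polynomial.X : Polynomial K)
          rw [Polynomial.natDegree_X] at h2
          omega
        rw [Polynomial.natDegree_sub_eq_left_of_natDegree_lt h1, Polynomial.natDegree_X_pow]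
      have hQ0 : (Polynomial.X ^ p - Polynomial.C (α ^ (p - 1)) * Polynomial.X :
          Polynomial K) ≠ 0 := by
        intro h
        rw [h, Polynomial.natDegree_zero] at hQdeg
        omega
      have hinj : Function.Injective (fun μ : Fp => algebraMap Fp K μ * α) := by
        intro μ ν h
        exact (algebraMap Fp K).injective (mul_right_cancel₀ hα0 h)
      set T : Finset K := insert z (Finset.univ.image (fun μ : Fp => algebraMap Fp K μ * α))
        with hT
      have hTcard : T.card = p + 1 := by
        rw [hT, Finset.card_insert_of_notMem, Finset.card_image_of_injective _ hinj,
          Finset.card_univ, hcardp]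
        simp only [Finset.mem_image, Finset.mem_univ, true_and]
        push_neg
        intro μ h
        exact hcon μ h.symm
      have hsub : T ⊆ (Polynomial.X ^ p - Polynomial.C (α ^ (p - 1)) * Polynomial.X :
          Polynomial K).roots.toFinset := by
        intro w hw
        rw [Multiset.mem_toFinset, Polynomial.mem_roots hQ0]
        have hwroot : w ^ p - α ^ (p - 1) * w = 0 := by
          rcases Finset.mem_insert.mp hw with rfl | hw2
          · simpa only [hu] using hz
          · obtain ⟨μ, -, rfl⟩ := Finset.mem_image.mp hw2
            rw [mul_pow, hfixFp μ, show α ^ (p - 1) * (algebraMap Fp K μ * α) =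
              algebraMap Fp K μ * (α ^ (p - 1) * α) from by ring, hαp]
            ring
        simpa [Polynomial.IsRoot] using hwroot
      have hle : T.card ≤ p := by
        calc T.card ≤ _ := Finset.card_le_card hsub
          _ ≤ _ := Multiset.toFinset_card_le _
          _ ≤ _ := Polynomial.card_roots' _
          _ = p := hQdeg
      omega
    obtain ⟨d', rfl⟩ : ∃ d', d = d' + 1 := ⟨d - 1, by omega⟩
    have hli : LinearIndependent Fp
        (fun i : Fin (d' + 1 - 1) => u (v (Fin.castLE (by omega) i))) := by
      rw [Fintype.linearIndependent_iff]
      intro lam hlam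
      have hsum : u (∑ i : Fin (d' + 1 - 1), lam i • v (Fin.castLE (by omega) i)) =
          ∑ i : Fin (d' + 1 - 1), lam i • u (v (Fin.castLE (by omega) i)) := by
        simp only [hu]
        rw [← hψ, map_sum, Finset.mul_sum, ← Finset.sum_sub_distrib]
        refine Finset.sum_congr rfl fun i _ => ?_
        rw [hψ, Algebra.smul_def, Algebra.smul_def, mul_pow, hfixFp]
        ring
      have huβ : u (∑ i : Fin (d' + 1 - 1), lam i • v (Fin.castLE (by omega) i)) = 0 := by
        rw [hsum]
        exact hlam
      obtain ⟨μ, hμ⟩ := hroot _ huβ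
      set Λ : Fin (d' + 1) → Fp := fun j => if h : (j : ℕ) < d' then lam ⟨j, h⟩ else -μ
        with hΛ
      have hΛsum : ∑ j : Fin (d' + 1), Λ j • v j = 0 := by
        rw [Fin.sum_univ_castSucc]
        have hterm : ∀ i : Fin d', Λ (Fin.castSucc i) • v (Fin.castSucc i) =
            lam i • v (Fin.castLE (by omega) i) := by
          intro i
          have h1 : Λ (Fin.castSucc i) = lam i := by
            rw [hΛ]
            simp only [Fin.coe_castSucc]
            rw [dif_pos (show ((i : ℕ)) < d' from i.isLt)]
            rfl
          have h2 : Fin.castSucc i = Fin.castLE (by omega : d' + 1 - 1 ≤ d' + 1) i := rfl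
          rw [h1, ← h2]
        have hlast : Λ (Fin.last d') = -μ := by
          rw [hΛ]
          simp
        rw [Finset.sum_congr rfl (fun i _ => hterm i), hlast]
        have hαlast : v (Fin.last d') = α := by
          rw [hα]
          congr 1
        rw [hαlast]
        rw [show (-μ) • α = -(algebraMap Fp K μ * α) from by
          rw [Algebra.smul_def, map_neg]; ring]
        rw [← hμ]
        exact add_neg_cancel _
      have hall := Fintype.linearIndependent_iff.mp hindep Λ hΛsum
      intro i
      have h3 := hall (Fin.castSucc i)
      rw [hΛ] at h3
      simp only [Fin.coe_castSucc] at h3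
      rw [dif_pos (show ((i : ℕ)) < d' from i.isLt)] at h3
      exact h3
    rw [hA']
    rw [finrank_span_eq_card hli]
    simp
  · intro x hx y hy
    obtain ⟨β, hβ, rfl⟩ := hkey x hx
    obtain ⟨γ, hγ, rfl⟩ := hkey y hy
    have h1 := (main γ hγ).2 β
    have h2 := (main β hβ).2 γ
    rw [← h1, ← h2, hiso β hβ γ hγ]
    simp only [hB]
    ring
end
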